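/- Let A be an order-d array with entries A_{i₁,…,i_d}, and let I₁,…,I_κ be a partition of [d] with I_κ = Ī_κ ∪ Ī_{κ+1} a further partition into two nonempty sets. Then ‖A‖_{I₁,…,I_{κ−1},Ī_κ,Ī_{κ+1}} ≤ ‖A‖_{I₁,…,I_κ} ≤ √(min{Π_{l∈Ī_κ} n_l, Π_{l∈Ī_{κ+1}} n_l}) · ‖A‖_{I₁,…,I_{κ−1},Ī_κ,Ī_{κ+1}}. -/

import Mathlib

open Finset

/-- The partition norm `‖A‖_{I₁,…,I_κ}` of an array `A`, where the partition of the
axes `ι` into blocks `β` is encoded by the assignment map `c : ι → β`: the supremum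
of contractions of `A` against unit-Frobenius-norm partial arrays, one per block. -/
noncomputable def partitionNorm {ι : Type*} [Fintype ι] [DecidableEq ι] (n : ι → ℕ)
    {β : Type*} [Fintype β] [DecidableEq β]
    (A : (∀ l, Fin (n l)) → ℝ) (c : ι → β) : ℝ :=
  sSup {r : ℝ | ∃ α : ∀ m : β, (∀ l : {x : ι // c x = m}, Fin (n l.1)) → ℝ,
    (∀ m, (∑ j, α m j ^ 2) = 1) ∧
      r = ∑ i, A i * ∏ m, α m fun l => i l.1}

section General

variable {ι : Type*} [Fintype ι] [DecidableEq ι] (n : ι → ℕ)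
variable {β : Type*} [Fintype β] [DecidableEq β]
variable (A : (∀ l, Fin (n l)) → ℝ)

/-- The set of contraction values. -/
def pnSet (c : ι → β) : Set ℝ :=
  {r : ℝ | ∃ α : ∀ m : β, (∀ l : {x : ι // c x = m}, Fin (n l.1)) → ℝ,
    (∀ m, (∑ j, α m j ^ 2) = 1) ∧
      r = ∑ i, A i * ∏ m, α m fun l => i l.1}

lemma partitionNorm_eq (c : ι → β) : partitionNorm n A c = sSup (pnSet n A c) := rfl

/-- Sum over a pi type of a product equals product of sums, via a reindexing equiv. -/
lemma sum_prod_equiv {Z : Type*} [Fintype Z] {B : Type*} [Fintype B] [DecidableEq B]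
    {W : B → Type*} [∀ b, Fintype (W b)] (e : Z ≃ ∀ b, W b) (f : ∀ b, W b → ℝ) :
    ∑ z : Z, ∏ b, f b (e z b) = ∏ b, ∑ w, f b w := by
  rw [Fintype.prod_sum f]
  exact Equiv.sum_comp e fun g => ∏ b, f b (g b)

/-- The equivalence between a pi type and the pi types over the fibers of `c`. -/
def fiberEquiv {π : ι → Type*} (c : ι → β) :
    (∀ l, π l) ≃ ∀ m, ∀ l : {x : ι // c x = m}, π l.1 where
  toFun i m l := i l.1
  invFun g l := g (c l) ⟨l, rfl⟩
  left_inv i := rfl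
  right_inv g := by
    funext m l
    obtain ⟨l, rfl⟩ := l
    rfl

lemma pnSet_bddAbove (c : ι → β) : BddAbove (pnSet n A c) := by
  refine ⟨Real.sqrt (∑ i, A i ^ 2), fun r hr => ?_⟩
  obtain ⟨α, hα, rfl⟩ := hr
  have key : ∑ i : ∀ l, Fin (n l), (∏ m, α m fun l => i l.1) ^ 2 = 1 := by
    calc ∑ i : ∀ l, Fin (n l), (∏ m, α m fun l => i l.1) ^ 2
        = ∑ i : ∀ l, Fin (n l), ∏ m, (α m fun l => i l.1) ^ 2 := by
          refine Finset.sum_congr rfl fun i _ => ?_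
          rw [← Finset.prod_pow]
      _ = ∏ m, ∑ j, α m j ^ 2 :=
          sum_prod_equiv (fiberEquiv (π := fun l => Fin (n l)) c) (fun m j => α m j ^ 2)
      _ = 1 := by simp [hα]
  have h2 := Finset.sum_mul_sq_le_sq_mul_sq Finset.univ A (fun i => ∏ m, α m fun l => i l.1)
  rw [key, mul_one] at h2
  calc (∑ i : ∀ l, Fin (n l), A i * ∏ m, α m fun l => i l.1)
      ≤ |∑ i : ∀ l, Fin (n l), A i * ∏ m, α m fun l => i l.1| := le_abs_self _
    _ = Real.sqrt ((∑ i : ∀ l, Fin (n l), A i * ∏ m, α m fun l => i l.1) ^ 2) :=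
        (Real.sqrt_sq_eq_abs _).symm
    _ ≤ Real.sqrt (∑ i, A i ^ 2) := Real.sqrt_le_sqrt h2

lemma pnSet_nonempty (c : ι → β) (hn : ∀ l, 0 < n l) : (pnSet n A c).Nonempty := by
  have j0 : ∀ m : β, (∀ l : {x : ι // c x = m}, Fin (n l.1)) := fun m l => ⟨0, hn l.1⟩
  refine ⟨_, fun m j => if j = j0 m then 1 else 0, fun m => ?_, rfl⟩
  rw [Finset.sum_eq_single (j0 m)]
  · simp
  · intro j _ hj; simp [hj]
  · simp

lemma pnSet_eq_empty (c : ι → β) (hn : ¬ ∀ l, 0 < n l) : pnSet n A c = ∅ := by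
  push_neg at hn
  obtain ⟨l, hl⟩ := hn
  ext r
  simp only [pnSet, Set.mem_setOf_eq, Set.mem_empty_iff_false, iff_false, not_exists]
  rintro α ⟨hα, -⟩
  have hempty : IsEmpty (∀ l' : {x : ι // c x = c l}, Fin (n l'.1)) :=
    ⟨fun j => Fin.elim0 ((j ⟨l, rfl⟩).cast (Nat.le_zero.mp hl))⟩
  have := hα (c l)
  rw [Finset.univ_eq_empty, Finset.sum_empty] at this
  exact one_ne_zero this.symm

lemma pnSet_neg_mem (c : ι → β) (b0 : β) {r : ℝ} (hr : r ∈ pnSet n A c) :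
    -r ∈ pnSet n A c := by
  obtain ⟨α, hα, rfl⟩ := hr
  refine ⟨fun m => if m = b0 then (fun j => -α m j) else α m, fun m => ?_, ?_⟩
  · by_cases h : m = b0
    · subst h; simpa using hα m
    · simpa [h] using hα m
  · have hprod : ∀ i : ∀ l, Fin (n l),
        (∏ m, (fun m' => if m' = b0 then (fun j => -α m' j) else α m') m (fun l => i l.1))
          = -∏ m, α m (fun l => i l.1) := by
      intro i
      calc ∏ m, (fun m' => if m' = b0 then (fun j => -α m' j) else α m') m (fun l => i l.1)
          = ∏ m, ((if m = b0 then (-1 : ℝ) else 1) * α m (fun l => i l.1)) :=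
            Finset.prod_congr rfl fun m _ => by by_cases h : m = b0 <;> simp [h]
        _ = (∏ m, (if m = b0 then (-1 : ℝ) else 1)) * ∏ m, α m (fun l => i l.1) :=
            Finset.prod_mul_distrib
        _ = -∏ m, α m (fun l => i l.1) := by
            rw [Finset.prod_ite_eq' Finset.univ b0 (fun _ => (-1 : ℝ))]
            simp
    symm
    calc ∑ i : ∀ l, Fin (n l),
          A i * ∏ m, (fun m' => if m' = b0 then (fun j => -α m' j) else α m') m (fun l => i l.1)
        = ∑ i : ∀ l, Fin (n l), -(A i * ∏ m, α m (fun l => i l.1)) :=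
          Finset.sum_congr rfl fun i _ => by rw [hprod i, mul_neg]
      _ = -∑ i : ∀ l, Fin (n l), A i * ∏ m, α m (fun l => i l.1) := by
          rw [Finset.sum_neg_distrib]

end General

section Coarse
variable {ι : Type*} [Fintype ι] [DecidableEq ι] (n : ι → ℕ)
variable {β : Type*} [Fintype β] [DecidableEq β]
variable {γ : Type*} [Fintype γ] [DecidableEq γ]
variable (A : (∀ l, Fin (n l)) → ℝ)

lemma prod_fiber_subtype (p : β → γ) (f : β → ℝ) :
    ∏ m : γ, ∏ b : {b : β // p b = m}, f b.1 = ∏ b : β, f b := by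
  rw [← Equiv.prod_comp (Equiv.sigmaFiberEquiv p) f]
  rw [← Finset.univ_sigma_univ, Finset.prod_sigma]
  rfl

/-- Restrictions along the fibers of a coarsened partition. -/
def coarseEquiv (c : ι → β) (p : β → γ) (m : γ) (π : ι → Type*) :
    (∀ l : {x : ι // (p ∘ c) x = m}, π l.1) ≃
      ∀ b : {b : β // p b = m}, ∀ l : {x : ι // c x = b.1}, π l.1 where
  toFun j b l := j ⟨l.1, show p (c l.1) = m by rw [l.2]; exact b.2⟩
  invFun g x := g ⟨c x.1, x.2⟩ ⟨x.1, rfl⟩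
  left_inv j := rfl
  right_inv g := by
    funext b l
    obtain ⟨x, hx⟩ := l
    obtain ⟨b, hb⟩ := b
    dsimp only at hx
    subst hx
    rfl

/-- Restrictions along two equivalent conditions. -/
def piCondEquiv {q q' : ι → Prop} (h : ∀ x, q x ↔ q' x) (π : ι → Type*) :
    (∀ l : {x : ι // q x}, π l.1) ≃ ∀ l : {x : ι // q' x}, π l.1 where
  toFun j l := j ⟨l.1, (h l.1).2 l.2⟩
  invFun j l := j ⟨l.1, (h l.1).1 l.2⟩
  left_inv j := rfl
  right_inv j := rfl

lemma pnSet_subset_coarse (c : ι → β) (p : β → γ) :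
    pnSet n A c ⊆ pnSet n A (p ∘ c) := by
  rintro r ⟨α, hα, rfl⟩
  refine ⟨fun m j => ∏ b : {b : β // p b = m},
      α b.1 (fun l => j ⟨l.1, show p (c l.1) = m by rw [l.2]; exact b.2⟩), fun m => ?_, ?_⟩
  · calc ∑ j : ∀ l : {x : ι // (p ∘ c) x = m}, Fin (n l.1), (∏ b : {b : β // p b = m},
          α b.1 (fun l => j ⟨l.1, show p (c l.1) = m by rw [l.2]; exact b.2⟩)) ^ 2
        = ∑ j : ∀ l : {x : ι // (p ∘ c) x = m}, Fin (n l.1), ∏ b : {b : β // p b = m},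
          (α b.1 ((coarseEquiv c p m (fun l => Fin (n l)) j) b)) ^ 2 := by
          refine Finset.sum_congr rfl fun j _ => ?_
          rw [← Finset.prod_pow]
          rfl
      _ = ∏ b : {b : β // p b = m}, ∑ jb, (α b.1 jb) ^ 2 :=
          sum_prod_equiv (coarseEquiv c p m (fun l => Fin (n l))) (fun b jb => α b.1 jb ^ 2)
      _ = 1 := by simp [hα]
  · refine Finset.sum_congr rfl fun i _ => ?_
    congr 1
    exact (prod_fiber_subtype p fun b => α b fun l => i l.1).symm

lemma partitionNorm_le_coarse (c : ι → β) (p : β → γ) :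
    partitionNorm n A c ≤ partitionNorm n A (p ∘ c) := by
  by_cases hn : ∀ l, 0 < n l
  · exact csSup_le_csSup (pnSet_bddAbove n A (p ∘ c)) (pnSet_nonempty n A c hn)
      (pnSet_subset_coarse n A c p)
  · rw [partitionNorm_eq, partitionNorm_eq, pnSet_eq_empty n A c hn,
      pnSet_eq_empty n A (p ∘ c) hn]

end Coarse
section MatrixLemma
variable {X Y : Type*} [Fintype X] [Fintype Y] [DecidableEq X] [DecidableEq Y]

lemma col_sq_le {M : X → Y → ℝ} {R : ℝ} (hR : 0 ≤ R)
    (h : ∀ (u : X → ℝ) (v : Y → ℝ), (∑ x, u x ^ 2) = 1 → (∑ y, v y ^ 2) = 1 →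
      (∑ x, ∑ y, M x y * (u x * v y)) ≤ R) (y0 : Y) :
    (∑ x, M x y0 ^ 2) ≤ R ^ 2 := by
  set s := ∑ x, M x y0 ^ 2 with hs
  have hs0 : 0 ≤ s := Finset.sum_nonneg fun x _ => sq_nonneg _
  rcases eq_or_lt_of_le hs0 with h0 | h0
  · rw [← h0]; positivity
  · set t := Real.sqrt s with ht'
    have ht : 0 < t := Real.sqrt_pos.2 h0
    have ht2 : t ^ 2 = s := Real.sq_sqrt hs0
    have hu : ∑ x, (M x y0 / t) ^ 2 = 1 := by
      simp only [div_pow, ← Finset.sum_div, ← hs]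
      rw [ht2, div_self (ne_of_gt h0)]
    have hv : ∑ y, (if y = y0 then (1 : ℝ) else 0) ^ 2 = 1 := by
      rw [Finset.sum_eq_single y0] <;> simp +contextual
    have hle := h _ _ hu hv
    have heq : ∑ x, ∑ y, M x y * ((M x y0 / t) * (if y = y0 then (1 : ℝ) else 0)) = t := by
      have hxy : ∀ x : X, ∑ y, M x y * ((M x y0 / t) * (if y = y0 then (1 : ℝ) else 0))
          = M x y0 ^ 2 / t := by
        intro x
        rw [Finset.sum_eq_single y0]
        · simp; ring
        · intro y _ hy; simp [hy]
        · simp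
      rw [Finset.sum_congr rfl fun x _ => hxy x, ← Finset.sum_div, ← hs, ← ht2]
      field_simp
    rw [heq] at hle
    calc s = t ^ 2 := ht2.symm
      _ ≤ R ^ 2 := by nlinarith

lemma frob_sq_le_min {M : X → Y → ℝ} {R : ℝ} (hR : 0 ≤ R)
    (h : ∀ (u : X → ℝ) (v : Y → ℝ), (∑ x, u x ^ 2) = 1 → (∑ y, v y ^ 2) = 1 →
      (∑ x, ∑ y, M x y * (u x * v y)) ≤ R) :
    (∑ x, ∑ y, M x y ^ 2) ≤ ↑(min (Fintype.card X) (Fintype.card Y)) * R ^ 2 := by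
  have hT : ∀ (v : Y → ℝ) (u : X → ℝ), (∑ y, v y ^ 2) = 1 → (∑ x, u x ^ 2) = 1 →
      (∑ y, ∑ x, (fun y x => M x y) y x * (v y * u x)) ≤ R := by
    intro v u hv hu
    rw [Finset.sum_comm]
    calc ∑ x, ∑ y, M x y * (v y * u x) = ∑ x, ∑ y, M x y * (u x * v y) := by
          refine Finset.sum_congr rfl fun x _ => Finset.sum_congr rfl fun y _ => by ring
      _ ≤ R := h u v hu hv
  rw [Nat.cast_min]
  rw [min_mul_of_nonneg _ _ (sq_nonneg R)]
  refine le_min ?_ ?_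
  · calc ∑ x, ∑ y, M x y ^ 2 ≤ ∑ x : X, R ^ 2 :=
          Finset.sum_le_sum fun x _ => col_sq_le hR hT x
      _ = ↑(Fintype.card X) * R ^ 2 := by
          rw [Finset.sum_const, nsmul_eq_mul]; rfl
  · rw [Finset.sum_comm]
    calc ∑ y, ∑ x, M x y ^ 2 ≤ ∑ y : Y, R ^ 2 :=
          Finset.sum_le_sum fun y _ => col_sq_le hR h y
      _ = ↑(Fintype.card Y) * R ^ 2 := by
          rw [Finset.sum_const, nsmul_eq_mul]; rfl


section Main
variable {ι : Type*} [Fintype ι] [DecidableEq ι] (n : ι → ℕ)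
variable {β : Type*} [Fintype β] [DecidableEq β]
variable {γ : Type*} [Fintype γ] [DecidableEq γ]
variable (A : (∀ l, Fin (n l)) → ℝ)

lemma delta_sum {Z : Type*} [Fintype Z] [DecidableEq Z] (z0 : Z) (f : Z → ℝ) :
    ∑ z, (if z0 = z then (1:ℝ) else 0) * f z = f z0 := by
  simp [ite_mul, Finset.sum_ite_eq]

/-- The refined family of partial arrays built from a coarse family and two unit vectors. -/
def tilde (c : ι → β) (p : β → γ) (b1 b2 : β)
    (hc2 : ∀ m : β, ¬ m = b1 → ¬ m = b2 → ∀ x : ι, (p ∘ c) x = p m → c x = m)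
    (α' : ∀ m' : γ, (∀ l : {x : ι // (p ∘ c) x = m'}, Fin (n l.1)) → ℝ)
    (u : (∀ l : {x : ι // c x = b1}, Fin (n l.1)) → ℝ)
    (v : (∀ l : {x : ι // c x = b2}, Fin (n l.1)) → ℝ)
    (m : β) (j : ∀ l : {x : ι // c x = m}, Fin (n l.1)) : ℝ :=
  if h1 : m = b1 then u (fun l => j ⟨l.1, by rw [l.2]; exact h1.symm⟩)
  else if h2 : m = b2 then v (fun l => j ⟨l.1, by rw [l.2]; exact h2.symm⟩)
  else α' (p m) (fun l => j ⟨l.1, hc2 m h1 h2 l.1 l.2⟩)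

lemma partitionNorm_coarse_le (c : ι → β) (p : β → γ) (hpsurj : Function.Surjective p)
    (b1 b2 : β) (hne : b1 ≠ b2) (hp12 : p b1 = p b2)
    (hfib : ∀ b, p b = p b1 → b = b1 ∨ b = b2)
    (hinj : ∀ b b', p b = p b' → p b ≠ p b1 → b = b') :
    partitionNorm n A (p ∘ c) ≤
      Real.sqrt (↑(min (Fintype.card (∀ l : {x : ι // c x = b1}, Fin (n l.1)))
          (Fintype.card (∀ l : {x : ι // c x = b2}, Fin (n l.1))))) *
        partitionNorm n A c := by
  classical
  by_cases hn : ∀ l, 0 < n l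
  swap
  · rw [partitionNorm_eq n A c, partitionNorm_eq n A (p ∘ c), pnSet_eq_empty n A c hn,
      pnSet_eq_empty n A (p ∘ c) hn, Real.sSup_empty, mul_zero]
  have hbdd := pnSet_bddAbove n A c
  have hRnn : 0 ≤ partitionNorm n A c := by
    obtain ⟨r, hr⟩ := pnSet_nonempty n A c hn
    have e1 := le_csSup hbdd hr
    have e2 := le_csSup hbdd (pnSet_neg_mem n A c b1 hr)
    rw [partitionNorm_eq n A c]
    linarith
  rw [partitionNorm_eq n A (p ∘ c)]
  refine csSup_le (pnSet_nonempty n A (p ∘ c) hn) ?_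
  rintro r ⟨α', hα', rfl⟩
  set Φ : (∀ l, Fin (n l)) → ℝ := fun i =>
    ∏ m' ∈ Finset.univ.erase (p b1), α' m' (fun l => i l.1) with hΦ
  set M : (∀ l : {x : ι // c x = b1}, Fin (n l.1)) →
      (∀ l : {x : ι // c x = b2}, Fin (n l.1)) → ℝ := fun x y => ∑ i, A i * Φ i *
      ((if (fun l : {x' : ι // c x' = b1} => i l.1) = x then (1:ℝ) else 0) *
       (if (fun l : {x' : ι // c x' = b2} => i l.1) = y then (1:ℝ) else 0)) with hM
  -- the bilinear expansion
  have bil : ∀ H : (∀ l : {x : ι // c x = b1}, Fin (n l.1)) →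
      (∀ l : {x : ι // c x = b2}, Fin (n l.1)) → ℝ,
      (∑ x, ∑ y, M x y * H x y)
        = ∑ i, A i * Φ i * H (fun l => i l.1) (fun l => i l.1) := by
    intro H
    symm
    calc ∑ i : ∀ l, Fin (n l), A i * Φ i * H (fun l => i l.1) (fun l => i l.1)
        = ∑ i : ∀ l, Fin (n l), ∑ x, ∑ y, A i * Φ i *
            ((if (fun l : {x' : ι // c x' = b1} => i l.1) = x then (1:ℝ) else 0) *
             (if (fun l : {x' : ι // c x' = b2} => i l.1) = y then (1:ℝ) else 0)) * H x y := by
          refine Finset.sum_congr rfl fun i _ => ?_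
          calc A i * Φ i * H (fun l => i l.1) (fun l => i l.1)
              = ∑ x, (if (fun l : {x' : ι // c x' = b1} => i l.1) = x then (1:ℝ) else 0) *
                  (A i * Φ i * H x (fun l => i l.1)) :=
                (delta_sum (fun l : {x' : ι // c x' = b1} => i l.1)
                  (fun x => A i * Φ i * H x (fun l => i l.1))).symm
            _ = ∑ x, (if (fun l : {x' : ι // c x' = b1} => i l.1) = x then (1:ℝ) else 0) *
                  ∑ y, (if (fun l : {x' : ι // c x' = b2} => i l.1) = y then (1:ℝ) else 0) *
                    (A i * Φ i * H x y) := by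
                refine Finset.sum_congr rfl fun x _ => ?_
                rw [delta_sum (fun l : {x' : ι // c x' = b2} => i l.1)
                  (fun y => A i * Φ i * H x y)]
            _ = ∑ x, ∑ y, A i * Φ i *
                  ((if (fun l : {x' : ι // c x' = b1} => i l.1) = x then (1:ℝ) else 0) *
                   (if (fun l : {x' : ι // c x' = b2} => i l.1) = y then (1:ℝ) else 0)) * H x y := by
                refine Finset.sum_congr rfl fun x _ => ?_
                rw [Finset.mul_sum]
                exact Finset.sum_congr rfl fun y _ => by ring
      _ = ∑ x, ∑ i : ∀ l, Fin (n l), ∑ y, A i * Φ i *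
            ((if (fun l : {x' : ι // c x' = b1} => i l.1) = x then (1:ℝ) else 0) *
             (if (fun l : {x' : ι // c x' = b2} => i l.1) = y then (1:ℝ) else 0)) * H x y :=
          Finset.sum_comm
      _ = ∑ x, ∑ y, ∑ i : ∀ l, Fin (n l), A i * Φ i *
            ((if (fun l : {x' : ι // c x' = b1} => i l.1) = x then (1:ℝ) else 0) *
             (if (fun l : {x' : ι // c x' = b2} => i l.1) = y then (1:ℝ) else 0)) * H x y :=
          Finset.sum_congr rfl fun x _ => Finset.sum_comm
      _ = ∑ x, ∑ y, M x y * H x y := by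
          refine Finset.sum_congr rfl fun x _ => Finset.sum_congr rfl fun y _ => ?_
          rw [hM, Finset.sum_mul]
  have hc2 : ∀ m : β, ¬ m = b1 → ¬ m = b2 → ∀ x : ι, (p ∘ c) x = p m → c x = m := by
    intro m h1 h2 x hx
    refine hinj (c x) m hx (fun hh => ?_)
    rcases hfib m ((hx : p (c x) = p m).symm.trans hh) with rfl | rfl
    exacts [h1 rfl, h2 rfl]
  have mem_uv : ∀ (u : (∀ l : {x : ι // c x = b1}, Fin (n l.1)) → ℝ)
      (v : (∀ l : {x : ι // c x = b2}, Fin (n l.1)) → ℝ),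
      (∑ x, u x ^ 2) = 1 → (∑ y, v y ^ 2) = 1 →
      (∑ i : ∀ l, Fin (n l), A i * Φ i * (u (fun l => i l.1) * v (fun l => i l.1)))
        ∈ pnSet n A c := by
    intro u v hu hv
    refine ⟨tilde n c p b1 b2 hc2 α' u v, fun m => ?_, ?_⟩
    · by_cases h1 : m = b1
      · subst h1
        simp only [tilde, dite_true]
        exact hu
      · by_cases h2 : m = b2
        · subst h2
          simp only [tilde, dite_true, dif_neg h1]
          exact hv
        · simp only [tilde, dif_neg h1, dif_neg h2]
          have hcond : ∀ x : ι, (c x = m) ↔ ((p ∘ c) x = p m) := by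
            intro x
            exact ⟨fun hx => show p (c x) = p m by rw [hx], fun hx => hc2 m h1 h2 x hx⟩
          calc ∑ j : ∀ l : {x : ι // c x = m}, Fin (n l.1),
                α' (p m) ((piCondEquiv hcond (fun l => Fin (n l))) j) ^ 2
              = ∑ j' : ∀ l : {x : ι // (p ∘ c) x = p m}, Fin (n l.1), α' (p m) j' ^ 2 :=
                Equiv.sum_comp (piCondEquiv hcond (fun l => Fin (n l)))
                  (fun j' => α' (p m) j' ^ 2)
            _ = 1 := hα' (p m)
    · refine Finset.sum_congr rfl fun i _ => ?_
      have hset : Finset.univ.filter (fun m => p m = p b1) = {b1, b2} := by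
        ext b
        simp only [Finset.mem_filter, Finset.mem_univ, true_and, Finset.mem_insert,
          Finset.mem_singleton]
        constructor
        · exact fun hb => hfib b hb
        · rintro (rfl | rfl)
          exacts [rfl, hp12.symm]
      have hsplit : (∏ m : β, tilde n c p b1 b2 hc2 α' u v m (fun l => i l.1))
          = Φ i * (u (fun l => i l.1) * v (fun l => i l.1)) := by
        rw [← Finset.prod_filter_mul_prod_filter_not Finset.univ (fun m => p m = p b1)]
        have hpart1 : (∏ m ∈ Finset.univ.filter (fun m => p m = p b1),
              tilde n c p b1 b2 hc2 α' u v m (fun l => i l.1))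
            = u (fun l => i l.1) * v (fun l => i l.1) := by
          rw [hset, Finset.prod_pair hne]
          simp only [tilde, dite_true]
          rw [dif_neg (fun h : b2 = b1 => hne h.symm)]
        have hpart2 : (∏ m ∈ Finset.univ.filter (fun m => ¬ p m = p b1),
              tilde n c p b1 b2 hc2 α' u v m (fun l => i l.1)) = Φ i := by
          rw [hΦ]
          refine Finset.prod_bij (fun m _ => p m) ?_ ?_ ?_ ?_
          · intro a ha
            simp only [Finset.mem_filter, Finset.mem_univ, true_and] at ha
            exact Finset.mem_erase.2 ⟨ha, Finset.mem_univ _⟩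
          · intro a1 ha1 a2 ha2 hpa
            simp only [Finset.mem_filter, Finset.mem_univ, true_and] at ha1
            exact hinj a1 a2 hpa ha1
          · intro m' hm'
            obtain ⟨b, rfl⟩ := hpsurj m'
            refine ⟨b, ?_, rfl⟩
            simp only [Finset.mem_filter, Finset.mem_univ, true_and]
            exact (Finset.mem_erase.1 hm').1
          · intro m hm
            simp only [Finset.mem_filter, Finset.mem_univ, true_and] at hm
            have h1 : ¬ m = b1 := fun h => hm (by rw [h])
            have h2 : ¬ m = b2 := fun h => hm (by rw [h]; exact hp12.symm)
            simp only [tilde]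
            rw [dif_neg h1, dif_neg h2]
        rw [hpart1, hpart2]
        ring
      rw [hsplit]
      ring
  have hMuv : ∀ (u : (∀ l : {x : ι // c x = b1}, Fin (n l.1)) → ℝ)
      (v : (∀ l : {x : ι // c x = b2}, Fin (n l.1)) → ℝ),
      (∑ x, u x ^ 2) = 1 → (∑ y, v y ^ 2) = 1 →
      (∑ x, ∑ y, M x y * (u x * v y)) ≤ partitionNorm n A c := by
    intro u v hu hv
    rw [bil (fun x y => u x * v y)]
    exact le_csSup hbdd (mem_uv u v hu hv)
  have hM2 := frob_sq_le_min hRnn hMuv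
  -- the equivalence between the product of the two pi types and the merged pi type
  let eXY : ((∀ l : {x : ι // c x = b1}, Fin (n l.1)) ×
      (∀ l : {x : ι // c x = b2}, Fin (n l.1)))
      ≃ (∀ l : {x : ι // (p ∘ c) x = p b1}, Fin (n l.1)) :=
    { toFun := fun z l => if h : c l.1 = b1 then z.1 ⟨l.1, h⟩
        else z.2 ⟨l.1, (hfib (c l.1) l.2).resolve_left h⟩
      invFun := fun j => (fun l => j ⟨l.1, show p (c l.1) = p b1 by rw [l.2]⟩,
        fun l => j ⟨l.1, show p (c l.1) = p b1 by rw [l.2]; exact hp12.symm⟩)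
      left_inv := by
        rintro ⟨x, y⟩
        refine Prod.ext ?_ ?_
        · funext l
          exact dif_pos l.2
        · funext l
          exact dif_neg (fun h : c l.1 = b1 => hne (h.symm.trans l.2))
      right_inv := by
        intro j
        funext l
        by_cases h : c l.1 = b1
        · exact dif_pos h
        · exact dif_neg h }
  set G : (∀ l : {x : ι // c x = b1}, Fin (n l.1)) →
      (∀ l : {x : ι // c x = b2}, Fin (n l.1)) → ℝ :=
    fun x y => α' (p b1) (eXY (x, y)) with hG
  have hG1 : (∑ x, ∑ y, G x y ^ 2) = 1 := by
    have h1 : ∑ z : ((∀ l : {x : ι // c x = b1}, Fin (n l.1)) ×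
        (∀ l : {x : ι // c x = b2}, Fin (n l.1))), α' (p b1) (eXY z) ^ 2 = 1 := by
      rw [Equiv.sum_comp eXY (fun j => α' (p b1) j ^ 2)]
      exact hα' (p b1)
    rw [Fintype.sum_prod_type] at h1
    exact h1
  have hr : (∑ i : ∀ l, Fin (n l), A i * ∏ m', α' m' fun l => i l.1)
      = ∑ x, ∑ y, M x y * G x y := by
    rw [bil G]
    refine Finset.sum_congr rfl fun i _ => ?_
    have harg : eXY ((fun l => i l.1), (fun l => i l.1))
        = (fun l : {x : ι // (p ∘ c) x = p b1} => i l.1) := by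
      funext l
      show (if _ : c l.1 = b1 then i l.1 else i l.1) = i l.1
      rw [dite_eq_ite, ite_self]
    have h1 : G (fun l => i l.1) (fun l => i l.1) = α' (p b1) (fun l => i l.1) := by
      show α' (p b1) (eXY ((fun l => i l.1), (fun l => i l.1))) = α' (p b1) (fun l => i l.1)
      rw [harg]
    rw [h1]
    simp only [hΦ]
    rw [← Finset.mul_prod_erase Finset.univ (fun m' => α' m' fun l => i l.1)
      (Finset.mem_univ (p b1))]
    ring
  have hcs := Finset.sum_mul_sq_le_sq_mul_sq Finset.univ
    (fun z : ((∀ l : {x : ι // c x = b1}, Fin (n l.1)) ×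
      (∀ l : {x : ι // c x = b2}, Fin (n l.1))) => M z.1 z.2) (fun z => G z.1 z.2)
  have e1 : (∑ z : ((∀ l : {x : ι // c x = b1}, Fin (n l.1)) ×
      (∀ l : {x : ι // c x = b2}, Fin (n l.1))), M z.1 z.2 * G z.1 z.2)
      = ∑ x, ∑ y, M x y * G x y := Fintype.sum_prod_type _
  have e2 : (∑ z : ((∀ l : {x : ι // c x = b1}, Fin (n l.1)) ×
      (∀ l : {x : ι // c x = b2}, Fin (n l.1))), M z.1 z.2 ^ 2)
      = ∑ x, ∑ y, M x y ^ 2 := Fintype.sum_prod_type _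
  have e3 : (∑ z : ((∀ l : {x : ι // c x = b1}, Fin (n l.1)) ×
      (∀ l : {x : ι // c x = b2}, Fin (n l.1))), G z.1 z.2 ^ 2)
      = ∑ x, ∑ y, G x y ^ 2 := Fintype.sum_prod_type _
  rw [e1, e2, e3, hG1, mul_one] at hcs
  rw [hr]
  calc ∑ x, ∑ y, M x y * G x y ≤ |∑ x, ∑ y, M x y * G x y| := le_abs_self _
    _ = Real.sqrt ((∑ x, ∑ y, M x y * G x y) ^ 2) := (Real.sqrt_sq_eq_abs _).symm
    _ ≤ Real.sqrt (∑ x, ∑ y, M x y ^ 2) := Real.sqrt_le_sqrt hcs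
    _ ≤ Real.sqrt (↑(min (Fintype.card (∀ l : {x : ι // c x = b1}, Fin (n l.1)))
          (Fintype.card (∀ l : {x : ι // c x = b2}, Fin (n l.1)))) *
          (partitionNorm n A c) ^ 2) := Real.sqrt_le_sqrt hM2
    _ = Real.sqrt (↑(min (Fintype.card (∀ l : {x : ι // c x = b1}, Fin (n l.1)))
          (Fintype.card (∀ l : {x : ι // c x = b2}, Fin (n l.1))))) *
          partitionNorm n A c := by
        rw [Real.sqrt_mul (Nat.cast_nonneg _), Real.sqrt_sq hRnn]
end Main

/-- Comparing the partition norms associated to a partition `I₁,…,I_{κ-1}, Ī_κ, Ī_{κ+1}`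
(encoded by `c : Fin d → Fin (κ+1)`, with the blocks `κ-1` and `κ` of `c` being
`Ī_κ` and `Ī_{κ+1}`) and its coarsening where `Ī_κ` and `Ī_{κ+1}` are joined. -/
theorem partition_norm_join_split (d κ : ℕ) (hκ : 0 < κ) (n : Fin d → ℕ)
    (A : (∀ l, Fin (n l)) → ℝ) (c : Fin d → Fin (κ + 1))
    (h1 : ∃ l, (c l : ℕ) = κ - 1) (h2 : ∃ l, (c l : ℕ) = κ) :
    partitionNorm n A c ≤
      partitionNorm n A
        ((fun m : Fin (κ + 1) =>
          if h : (m : ℕ) < κ then (⟨m, h⟩ : Fin κ) else ⟨κ - 1, by omega⟩) ∘ c) ∧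
    partitionNorm n A
        ((fun m : Fin (κ + 1) =>
          if h : (m : ℕ) < κ then (⟨m, h⟩ : Fin κ) else ⟨κ - 1, by omega⟩) ∘ c) ≤
      Real.sqrt (min (∏ l ∈ Finset.univ.filter fun l => (c l : ℕ) = κ - 1, (n l : ℝ))
          (∏ l ∈ Finset.univ.filter fun l => (c l : ℕ) = κ, (n l : ℝ))) *
        partitionNorm n A c := by
  set p : Fin (κ + 1) → Fin κ :=
    (fun m : Fin (κ + 1) =>
      if h : (m : ℕ) < κ then (⟨m, h⟩ : Fin κ) else ⟨κ - 1, by omega⟩) with hp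
  set b1 : Fin (κ + 1) := ⟨κ - 1, by omega⟩ with hb1
  set b2 : Fin (κ + 1) := ⟨κ, by omega⟩ with hb2
  have hb1v : (b1 : ℕ) = κ - 1 := rfl
  have hb2v : (b2 : ℕ) = κ := rfl
  have hpval : ∀ m : Fin (κ + 1), (p m : ℕ) = if (m : ℕ) < κ then (m : ℕ) else κ - 1 := by
    intro m
    by_cases h : (m : ℕ) < κ
    · simp [hp, h]
    · simp [hp, h]
  have hne : b1 ≠ b2 := by
    intro h
    have := congrArg Fin.val h
    rw [hb1v, hb2v] at this
    omega
  have hp12 : p b1 = p b2 := by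
    refine Fin.ext ?_
    rw [hpval, hpval, hb1v, hb2v]
    have : κ - 1 < κ := by omega
    rw [if_pos this, if_neg (lt_irrefl κ)]
  have hfib : ∀ b, p b = p b1 → b = b1 ∨ b = b2 := by
    intro b hb
    have hv := congrArg Fin.val hb
    rw [hpval, hpval, hb1v, if_pos (by omega : κ - 1 < κ)] at hv
    by_cases h : (b : ℕ) < κ
    · rw [if_pos h] at hv
      left
      exact Fin.ext (by rw [hv, hb1v])
    · right
      have := b.isLt
      exact Fin.ext (by rw [hb2v]; omega)
  have hinj : ∀ b b', p b = p b' → p b ≠ p b1 → b = b' := by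
    intro b b' heq hner
    have hvb1 : (p b1 : ℕ) = κ - 1 := by
      rw [hpval, hb1v, if_pos (by omega : κ - 1 < κ)]
    have hb : (b : ℕ) < κ := by
      by_contra h
      exact hner (Fin.ext (by rw [hpval, if_neg h, hvb1]))
    have hb' : (b' : ℕ) < κ := by
      by_contra h
      refine hner (Fin.ext ?_)
      have := congrArg Fin.val heq
      rw [hpval, hpval, if_pos hb, if_neg h] at this
      rw [hpval, if_pos hb, this, hvb1]
    have := congrArg Fin.val heq
    rw [hpval, hpval, if_pos hb, if_pos hb'] at this
    exact Fin.ext this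
  have hpsurj : Function.Surjective p := by
    intro m'
    by_cases h : (m' : ℕ) = κ - 1
    · exact ⟨b1, Fin.ext (by rw [hpval, hb1v, if_pos (by omega : κ - 1 < κ), h])⟩
    · refine ⟨⟨m'.1, by omega⟩, Fin.ext ?_⟩
      have hm' := m'.isLt
      rw [hpval]
      simp only []
      rw [if_pos (by omega : (m'.1 : ℕ) < κ)]
  have hcard1 : (↑(Fintype.card (∀ l : {x : Fin d // c x = b1}, Fin (n l.1))) : ℝ)
      = ∏ l ∈ Finset.univ.filter fun l => (c l : ℕ) = κ - 1, (n l : ℝ) := by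
    rw [Fintype.card_pi]
    simp only [Fintype.card_fin]
    rw [Nat.cast_prod]
    exact (Finset.prod_subtype (Finset.univ.filter fun l => (c l : ℕ) = κ - 1)
      (fun x => by simp [Finset.mem_filter, Fin.ext_iff, hb1v]) (fun l => (n l : ℝ))).symm
  have hcard2 : (↑(Fintype.card (∀ l : {x : Fin d // c x = b2}, Fin (n l.1))) : ℝ)
      = ∏ l ∈ Finset.univ.filter fun l => (c l : ℕ) = κ, (n l : ℝ) := by
    rw [Fintype.card_pi]
    simp only [Fintype.card_fin]
    rw [Nat.cast_prod]
    exact (Finset.prod_subtype (Finset.univ.filter fun l => (c l : ℕ) = κ)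
      (fun x => by simp [Finset.mem_filter, Fin.ext_iff, hb2v]) (fun l => (n l : ℝ))).symm
  constructor
  · exact partitionNorm_le_coarse n A c p
  · have key := partitionNorm_coarse_le n A c p hpsurj b1 b2 hne hp12 hfib hinj
    rw [Nat.cast_min, hcard1, hcard2] at key
    exact key
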